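/- (Pointwise correctness of the constrained hinge-loss minimizer.) Let d, k, n be positive integers, γ, σ, C > 0, η ∈ (0,1) and τ ∈ (0, γ/4). Let w* ∈ ℝ^{kd} with ‖w*‖₂ ≤ 1. Let I be a finite index set with |I| ≤ n, partitioned into a clean part Cl and a dirty part D, with samples (x_i, y_i) ∈ ℝ^d × {1,…,k}. Assume: (i) for every i ∈ Cl and every y' ≠ y_i, ⟨w*_{y_i} − w*_{y'}, x_i⟩ ≥ γ; (ii) |D| ≤ ηn, and there exist centers μ_i ∈ ℝ^d (i ∈ D) such that for every i ∈ D and every y' ≠ y_i, ⟨w*_{y_i} − w*_{y'}, μ_i⟩ ≥ γ, and for every subset T ⊆ D, ‖Σ_{i∈T}(x_i − μ_i)‖₂ ≤ C·σ·√(|T|·n). Let ŵ be a minimizer of w ↦ Σ_{i∈I} ℓ_γ(w;(x_i,y_i)) over the closed unit ball {w ∈ ℝ^{kd} : ‖w‖₂ ≤ 1}. Let (x,y) ∈ ℝ^d × {1,…,k} and set S_P := { i ∈ Cl : (x_i, y_i) ∈ P_ŵ^τ(x,y) }. If |S_P| > 8Cσn√η / γ, then (x,y) is not misclassified by ŵ,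 i.e., ⟨ŵ_y, x⟩ ≥ ⟨ŵ_{y'}, x⟩ for every y' ∈ {1,…,k}. -/

import Mathlib

open scoped BigOperators RealInnerProductSpace
open Finset

/-- The class-sensitive feature map `Ψ : ℝ^d × {1,…,k} → ℝ^{kd}`: the `y`-th block of
`d` coordinates of `Psi d k x y` equals `x`, the remaining coordinates are zero. -/
noncomputable def Psi (d k : ℕ) (x : EuclideanSpace ℝ (Fin d)) (y : Fin k) :
    EuclideanSpace ℝ (Fin k × Fin d) :=
  WithLp.toLp 2 (fun p : Fin k × Fin d => if p.1 = y then x p.2 else 0)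

/-- The `y`-th block `w_y ∈ ℝ^d` of a vector `w ∈ ℝ^{kd}`. -/
noncomputable def block (d k : ℕ) (w : EuclideanSpace ℝ (Fin k × Fin d)) (y : Fin k) :
    EuclideanSpace ℝ (Fin d) :=
  WithLp.toLp 2 (fun j => w (y, j))

/-- The multiclass pancake `P_w^τ(x,y)`: pairs `(x',y')` with `y' = y` and
`|⟨w_ȳ, x' − x⟩| ≤ τ` for every label `ȳ`. -/
def pancake (d k : ℕ) (w : EuclideanSpace ℝ (Fin k × Fin d)) (τ : ℝ)
    (x : EuclideanSpace ℝ (Fin d)) (y : Fin k) :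
    Set (EuclideanSpace ℝ (Fin d) × Fin k) :=
  {p | p.2 = y ∧ ∀ ybar : Fin k, |⟪block d k w ybar, p.1 - x⟫| ≤ τ}

/-- The γ-scaled multiclass hinge loss
`ℓ_γ(w;(x,y)) = max_{y'} (1[y' ≠ y] − (1/γ)·⟨w, Ψ(x,y) − Ψ(x,y')⟩)`. -/
noncomputable def hinge (d k : ℕ) [NeZero k] (γ : ℝ)
    (w : EuclideanSpace ℝ (Fin k × Fin d)) (x : EuclideanSpace ℝ (Fin d)) (y : Fin k) : ℝ :=
  Finset.univ.sup' Finset.univ_nonempty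
    (fun y' : Fin k => (if y' ≠ y then (1:ℝ) else 0) - (1/γ) * ⟪w, Psi d k x y - Psi d k x y'⟫)

lemma inner_Psi (d k : ℕ) (w : EuclideanSpace ℝ (Fin k × Fin d))
    (x : EuclideanSpace ℝ (Fin d)) (a : Fin k) :
    ⟪w, Psi d k x a⟫ = ⟪block d k w a, x⟫ := by
  simp only [PiLp.inner_apply, Psi, block, RCLike.inner_apply, conj_trivial]
  rw [Fintype.sum_prod_type]
  rw [Finset.sum_eq_single a]
  · simp
  · intro b _ hb; simp [hb]
  · simp

lemma inner_Psi_sub (d k : ℕ) (w : EuclideanSpace ℝ (Fin k × Fin d))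
    (x : EuclideanSpace ℝ (Fin d)) (a b : Fin k) :
    ⟪w, Psi d k x a - Psi d k x b⟫ = ⟪block d k w a, x⟫ - ⟪block d k w b, x⟫ := by
  rw [inner_sub_right, inner_Psi, inner_Psi]

lemma hinge_ge (d k : ℕ) [NeZero k] (γ : ℝ) (w : EuclideanSpace ℝ (Fin k × Fin d))
    (x : EuclideanSpace ℝ (Fin d)) (y b : Fin k) :
    (if b ≠ y then (1:ℝ) else 0) - (1/γ) * ⟪w, Psi d k x y - Psi d k x b⟫
      ≤ hinge d k γ w x y := by
  unfold hinge
  exact Finset.le_sup' (fun y' : Fin k => (if y' ≠ y then (1:ℝ) else 0) - (1/γ) * ⟪w, Psi d k x y - Psi d k x y'⟫) (Finset.mem_univ b)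

lemma hinge_nonneg (d k : ℕ) [NeZero k] (γ : ℝ) (w : EuclideanSpace ℝ (Fin k × Fin d))
    (x : EuclideanSpace ℝ (Fin d)) (y : Fin k) : 0 ≤ hinge d k γ w x y := by
  have := hinge_ge d k γ w x y y
  simpa using this

lemma hinge_le (d k : ℕ) [NeZero k] (γ : ℝ) (w : EuclideanSpace ℝ (Fin k × Fin d))
    (x : EuclideanSpace ℝ (Fin d)) (y : Fin k) (c : ℝ)
    (h : ∀ b : Fin k, (if b ≠ y then (1:ℝ) else 0) - (1/γ) * ⟪w, Psi d k x y - Psi d k x b⟫ ≤ c) :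
    hinge d k γ w x y ≤ c := by
  unfold hinge; exact Finset.sup'_le _ _ fun b _ => h b

lemma hinge_eq_exists (d k : ℕ) [NeZero k] (γ : ℝ) (w : EuclideanSpace ℝ (Fin k × Fin d))
    (x : EuclideanSpace ℝ (Fin d)) (y : Fin k) :
    ∃ b : Fin k, hinge d k γ w x y
      = (if b ≠ y then (1:ℝ) else 0) - (1/γ) * ⟪w, Psi d k x y - Psi d k x b⟫ := by
  obtain ⟨b, _, hb⟩ := Finset.exists_mem_eq_sup' (Finset.univ_nonempty (α := Fin k))
    (fun y' : Fin k => (if y' ≠ y then (1:ℝ) else 0) - (1/γ) * ⟪w, Psi d k x y - Psi d k x y'⟫)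
  exact ⟨b, hb⟩

lemma norm_sq_blocks (d k : ℕ) (w : EuclideanSpace ℝ (Fin k × Fin d)) :
    ∑ a : Fin k, ‖block d k w a‖ ^ 2 = ‖w‖ ^ 2 := by
  have h1 : ∀ a, ‖block d k w a‖ ^ 2 = ∑ j : Fin d, ‖w (a, j)‖ ^ 2 := by
    intro a
    rw [EuclideanSpace.norm_eq, Real.sq_sqrt (by positivity)]
    rfl
  simp_rw [h1]
  rw [EuclideanSpace.norm_eq, Real.sq_sqrt (by positivity)]
  exact (Fintype.sum_prod_type (f := fun p : Fin k × Fin d => ‖w p‖ ^ 2)).symm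

set_option maxHeartbeats 1000000 in
open scoped Classical in
/-- pointwise correctness of the constrained hinge-loss minimizer. -/
theorem stmt_16 {ι : Type*} [DecidableEq ι] (d k n : ℕ) [NeZero k] (hd : 0 < d) (hn : 0 < n)
    (γ σ C : ℝ) (hγ : 0 < γ) (hσ : 0 < σ) (hC : 0 < C)
    (η : ℝ) (hη0 : 0 < η) (hη1 : η < 1) (τ : ℝ) (hτ0 : 0 < τ) (hτγ : τ < γ / 4)
    (wstar : EuclideanSpace ℝ (Fin k × Fin d)) (hwstar : ‖wstar‖ ≤ 1)
    (Cl D : Finset ι) (hClD : Disjoint Cl D) (hI : ((Cl ∪ D).card : ℝ) ≤ n)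
    (x : ι → EuclideanSpace ℝ (Fin d)) (y : ι → Fin k)
    (hmargin : ∀ i ∈ Cl, ∀ y' : Fin k, y' ≠ y i →
      γ ≤ ⟪block d k wstar (y i) - block d k wstar y', x i⟫)
    (hDcard : (D.card : ℝ) ≤ η * n)
    (μ : ι → EuclideanSpace ℝ (Fin d))
    (hDmargin : ∀ i ∈ D, ∀ y' : Fin k, y' ≠ y i →
      γ ≤ ⟪block d k wstar (y i) - block d k wstar y', μ i⟫)
    (hDdev : ∀ T ⊆ D, ‖∑ i ∈ T, (x i - μ i)‖ ≤ C * σ * Real.sqrt (T.card * n))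
    (what : EuclideanSpace ℝ (Fin k × Fin d)) (hwhat : ‖what‖ ≤ 1)
    (hmin : ∀ w : EuclideanSpace ℝ (Fin k × Fin d), ‖w‖ ≤ 1 →
      ∑ i ∈ Cl ∪ D, hinge d k γ what (x i) (y i) ≤ ∑ i ∈ Cl ∪ D, hinge d k γ w (x i) (y i))
    (x₀ : EuclideanSpace ℝ (Fin d)) (y₀ : Fin k)
    (hSP : 8 * C * σ * n * Real.sqrt η / γ <
      (((Cl.filter fun i => (x i, y i) ∈ pancake d k what τ x₀ y₀).card : ℕ) : ℝ)) :
    ∀ y' : Fin k, ⟪block d k what y', x₀⟫ ≤ ⟪block d k what y₀, x₀⟫ := by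
  by_contra hcon
  push_neg at hcon
  obtain ⟨y', hy'⟩ := hcon
  have hy'ne : y' ≠ y₀ := by rintro rfl; exact lt_irrefl _ hy'
  set SP := Cl.filter fun i => (x i, y i) ∈ pancake d k what τ x₀ y₀ with hSPdef
  -- Step A: on pancake points the hinge loss of what is at least 1/2
  have stepA : ∀ i ∈ SP, (1:ℝ)/2 ≤ hinge d k γ what (x i) (y i) := by
    intro i hi
    rw [hSPdef, Finset.mem_filter] at hi
    obtain ⟨hiCl, hyi, hpan⟩ := hi
    have hyi' : y i = y₀ := hyi
    have h1 : |⟪block d k what y₀, x i - x₀⟫| ≤ τ := hpan y₀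
    have h2 : |⟪block d k what y', x i - x₀⟫| ≤ τ := hpan y'
    rw [inner_sub_right] at h1 h2
    have hge := hinge_ge d k γ what (x i) (y i) y'
    rw [hyi', if_pos hy'ne, inner_Psi_sub] at hge
    have habs1 := abs_le.1 h1
    have habs2 := abs_le.1 h2
    have hkey : ⟪block d k what y₀, x i⟫ - ⟪block d k what y', x i⟫ ≤ γ/2 := by
      linarith [habs1.2, habs2.1]
    have h3 : (1/γ) * (⟪block d k what y₀, x i⟫ - ⟪block d k what y', x i⟫) ≤ 1/2 := by
      rw [show (1:ℝ)/2 = (1/γ)*(γ/2) by field_simp]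
      exact mul_le_mul_of_nonneg_left hkey (by positivity)
    rw [hyi']
    linarith [hge]
  -- Step B: lower bound on total loss of what
  have stepB : (SP.card : ℝ) * (1/2) ≤ ∑ i ∈ Cl ∪ D, hinge d k γ what (x i) (y i) := by
    have h1 : (SP.card : ℝ) * (1/2) ≤ ∑ i ∈ SP, hinge d k γ what (x i) (y i) := by
      calc (SP.card : ℝ) * (1/2) = ∑ _i ∈ SP, (1:ℝ)/2 := by
            rw [Finset.sum_const, nsmul_eq_mul]
        _ ≤ _ := Finset.sum_le_sum stepA
    have h2 : ∑ i ∈ SP, hinge d k γ what (x i) (y i)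
        ≤ ∑ i ∈ Cl ∪ D, hinge d k γ what (x i) (y i) := by
      apply Finset.sum_le_sum_of_subset_of_nonneg
      · exact (Finset.filter_subset _ _).trans Finset.subset_union_left
      · intro i _ _; exact hinge_nonneg _ _ _ _ _ _
    linarith
  -- Step D1: clean loss of wstar is ≤ 0
  have stepD1 : ∑ i ∈ Cl, hinge d k γ wstar (x i) (y i) ≤ 0 := by
    apply Finset.sum_nonpos
    intro i hi
    apply hinge_le
    intro b
    by_cases hb : b = y i
    · subst hb; simp
    · rw [if_pos hb, inner_Psi_sub]
      have hm := hmargin i hi b hb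
      rw [inner_sub_left] at hm
      have h3 : (1/γ)*γ ≤ (1/γ)*(⟪block d k wstar (y i), x i⟫ - ⟪block d k wstar b, x i⟫) :=
        mul_le_mul_of_nonneg_left hm (by positivity)
      have h4 : (1/γ)*γ = 1 := by field_simp
      linarith
  -- choose maximizers of the wstar-hinge
  choose g hg using fun i => hinge_eq_exists d k γ wstar (x i) (y i)
  set v : ι → EuclideanSpace ℝ (Fin d) := fun i => μ i - x i with hv
  -- per-point dirty bound
  have hpt : ∀ i ∈ D, hinge d k γ wstar (x i) (y i)
      ≤ (1/γ) * (⟪block d k wstar (y i), v i⟫ - ⟪block d k wstar (g i), v i⟫) := by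
    intro i hi
    rw [hg i, inner_Psi_sub]
    by_cases hb : g i = y i
    · rw [hb]; simp
    · rw [if_pos hb]
      have hm := hDmargin i hi (g i) hb
      rw [inner_sub_left] at hm
      have h3 : (1/γ)*γ ≤ (1/γ)*(⟪block d k wstar (y i), μ i⟫ - ⟪block d k wstar (g i), μ i⟫) :=
        mul_le_mul_of_nonneg_left hm (by positivity)
      have h4 : (1/γ)*γ = 1 := by field_simp
      have h5 : (1/γ) * (⟪block d k wstar (y i), v i⟫ - ⟪block d k wstar (g i), v i⟫)
          + (1/γ) * (⟪block d k wstar (y i), x i⟫ - ⟪block d k wstar (g i), x i⟫)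
          = (1/γ) * (⟪block d k wstar (y i), μ i⟫ - ⟪block d k wstar (g i), μ i⟫) := by
        rw [hv]; simp only [inner_sub_right]; ring
      linarith
  -- fiberwise regrouping
  set sfib : Fin k → EuclideanSpace ℝ (Fin d) :=
    fun a => ∑ i ∈ D.filter (fun i => y i = a), v i with hsfib
  set tfib : Fin k → EuclideanSpace ℝ (Fin d) :=
    fun a => ∑ i ∈ D.filter (fun i => g i = a), v i with htfib
  have hfib : ∑ i ∈ D, (⟪block d k wstar (y i), v i⟫ - ⟪block d k wstar (g i), v i⟫)
      = ∑ a : Fin k, ⟪block d k wstar a, sfib a - tfib a⟫ := by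
    simp_rw [inner_sub_right]
    rw [Finset.sum_sub_distrib, Finset.sum_sub_distrib]
    congr 1
    · rw [← Finset.sum_fiberwise D y (fun i => ⟪block d k wstar (y i), v i⟫)]
      refine Finset.sum_congr rfl fun a _ => ?_
      rw [hsfib]
      rw [inner_sum]
      refine Finset.sum_congr rfl fun i hi => ?_
      rw [(Finset.mem_filter.1 hi).2]
    · rw [← Finset.sum_fiberwise D g (fun i => ⟪block d k wstar (g i), v i⟫)]
      refine Finset.sum_congr rfl fun a _ => ?_
      rw [htfib]
      rw [inner_sum]
      refine Finset.sum_congr rfl fun i hi => ?_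
      rw [(Finset.mem_filter.1 hi).2]
  -- norm bounds on fibers
  have hsnorm : ∀ a : Fin k, ‖sfib a‖ ≤ C * σ * Real.sqrt ((D.filter (fun i => y i = a)).card * n) := by
    intro a
    have hd := hDdev _ (Finset.filter_subset (fun i => y i = a) D)
    have heq : sfib a = -∑ i ∈ D.filter (fun i => y i = a), (x i - μ i) := by
      simp only [hsfib]
      rw [← Finset.sum_neg_distrib]
      exact Finset.sum_congr rfl fun i _ => by simp [hv]
    rw [heq, norm_neg]; exact hd
  have htnorm : ∀ a : Fin k, ‖tfib a‖ ≤ C * σ * Real.sqrt ((D.filter (fun i => g i = a)).card * n) := by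
    intro a
    have hd := hDdev _ (Finset.filter_subset (fun i => g i = a) D)
    have heq : tfib a = -∑ i ∈ D.filter (fun i => g i = a), (x i - μ i) := by
      simp only [htfib]
      rw [← Finset.sum_neg_distrib]
      exact Finset.sum_congr rfl fun i _ => by simp [hv]
    rw [heq, norm_neg]; exact hd
  -- sum of squared fiber norms
  have hzsq : ∑ a : Fin k, ‖sfib a - tfib a‖^2 ≤ 4 * (C*σ)^2 * n * D.card := by
    have hb : ∀ a : Fin k, ‖sfib a - tfib a‖^2
        ≤ 2*(C*σ)^2 * n * (((D.filter (fun i => y i = a)).card : ℝ)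
          + ((D.filter (fun i => g i = a)).card : ℝ)) := by
      intro a
      have h1 := hsnorm a
      have h2 := htnorm a
      have h3 : ‖sfib a - tfib a‖ ≤ ‖sfib a‖ + ‖tfib a‖ := norm_sub_le _ _
      have hs1 : Real.sqrt (((D.filter (fun i => y i = a)).card : ℝ) * n) ^ 2
          = ((D.filter (fun i => y i = a)).card : ℝ) * n := Real.sq_sqrt (by positivity)
      have hs2 : Real.sqrt (((D.filter (fun i => g i = a)).card : ℝ) * n) ^ 2
          = ((D.filter (fun i => g i = a)).card : ℝ) * n := Real.sq_sqrt (by positivity)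
      have hz2 : ‖sfib a - tfib a‖^2 ≤ (‖sfib a‖ + ‖tfib a‖)^2 :=
        pow_le_pow_left₀ (norm_nonneg _) h3 2
      have h4 : (‖sfib a‖ + ‖tfib a‖)^2 ≤ 2*‖sfib a‖^2 + 2*‖tfib a‖^2 := by
        nlinarith [sq_nonneg (‖sfib a‖ - ‖tfib a‖)]
      have h5 : ‖sfib a‖^2 ≤ (C*σ)^2 * (((D.filter (fun i => y i = a)).card : ℝ) * n) := by
        calc ‖sfib a‖^2 ≤ (C * σ * Real.sqrt (((D.filter (fun i => y i = a)).card : ℝ) * n))^2 :=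
              pow_le_pow_left₀ (norm_nonneg _) h1 2
          _ = (C*σ)^2 * (((D.filter (fun i => y i = a)).card : ℝ) * n) := by
              rw [mul_pow, hs1]
      have h6 : ‖tfib a‖^2 ≤ (C*σ)^2 * (((D.filter (fun i => g i = a)).card : ℝ) * n) := by
        calc ‖tfib a‖^2 ≤ (C * σ * Real.sqrt (((D.filter (fun i => g i = a)).card : ℝ) * n))^2 :=
              pow_le_pow_left₀ (norm_nonneg _) h2 2
          _ = (C*σ)^2 * (((D.filter (fun i => g i = a)).card : ℝ) * n) := by
              rw [mul_pow, hs2]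
      have e : 2*(C*σ)^2 * n * (((D.filter (fun i => y i = a)).card : ℝ)
          + ((D.filter (fun i => g i = a)).card : ℝ))
          = 2*((C*σ)^2 * (((D.filter (fun i => y i = a)).card : ℝ) * n))
            + 2*((C*σ)^2 * (((D.filter (fun i => g i = a)).card : ℝ) * n)) := by ring
      linarith [hz2, h4, h5, h6, e]
    have hc1 : ∑ a : Fin k, ((D.filter (fun i => y i = a)).card : ℝ) = D.card := by
      norm_cast
      exact (Finset.card_eq_sum_card_fiberwise (fun i _ => Finset.mem_univ (y i))).symm
    have hc2 : ∑ a : Fin k, ((D.filter (fun i => g i = a)).card : ℝ) = D.card := by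
      norm_cast
      exact (Finset.card_eq_sum_card_fiberwise (fun i _ => Finset.mem_univ (g i))).symm
    calc ∑ a : Fin k, ‖sfib a - tfib a‖^2
        ≤ ∑ a : Fin k, 2*(C*σ)^2 * n * (((D.filter (fun i => y i = a)).card : ℝ)
            + ((D.filter (fun i => g i = a)).card : ℝ)) :=
          Finset.sum_le_sum fun a _ => hb a
      _ = 2*(C*σ)^2 * n * (∑ a : Fin k, (((D.filter (fun i => y i = a)).card : ℝ)
            + ((D.filter (fun i => g i = a)).card : ℝ))) := by rw [Finset.mul_sum]
      _ = 4 * (C*σ)^2 * n * D.card := by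
          rw [Finset.sum_add_distrib, hc1, hc2]; ring
  -- Cauchy-Schwarz
  have hwsq : ∑ a : Fin k, ‖block d k wstar a‖^2 ≤ 1 := by
    rw [norm_sq_blocks]
    nlinarith [norm_nonneg wstar]
  have hCS : ∑ a : Fin k, ⟪block d k wstar a, sfib a - tfib a⟫ ≤ 2*C*σ*((n:ℝ)*Real.sqrt η) := by
    have h1 : ∑ a : Fin k, ⟪block d k wstar a, sfib a - tfib a⟫
        ≤ ∑ a : Fin k, ‖block d k wstar a‖ * ‖sfib a - tfib a‖ :=
      Finset.sum_le_sum fun a _ => real_inner_le_norm _ _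
    set A := ∑ a : Fin k, ‖block d k wstar a‖ * ‖sfib a - tfib a‖ with hA
    have hA0 : 0 ≤ A := Finset.sum_nonneg fun a _ => mul_nonneg (norm_nonneg _) (norm_nonneg _)
    have hA2 : A^2 ≤ 4 * (C*σ)^2 * n * D.card := by
      have hcs := Finset.sum_mul_sq_le_sq_mul_sq Finset.univ
        (fun a => ‖block d k wstar a‖) (fun a => ‖sfib a - tfib a‖)
      have hz0 : (0:ℝ) ≤ ∑ a : Fin k, ‖sfib a - tfib a‖^2 :=
        Finset.sum_nonneg fun a _ => sq_nonneg _
      have hw0 : (0:ℝ) ≤ ∑ a : Fin k, ‖block d k wstar a‖^2 :=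
        Finset.sum_nonneg fun a _ => sq_nonneg _
      nlinarith [hcs, hwsq, hzsq, hz0, hw0]
    have hA3 : A ≤ Real.sqrt (4 * (C*σ)^2 * n * D.card) := by
      have h := Real.sqrt_le_sqrt hA2
      rwa [Real.sqrt_sq hA0] at h
    have hs : Real.sqrt (4 * (C*σ)^2 * n * D.card) ≤ 2*C*σ*((n:ℝ)*Real.sqrt η) := by
      have hsqη : Real.sqrt η ^ 2 = η := Real.sq_sqrt hη0.le
      have hb : (4 * (C*σ)^2 * n * D.card : ℝ) ≤ (2*C*σ*((n:ℝ)*Real.sqrt η))^2 := by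
        have hrhs : (2*C*σ*((n:ℝ)*Real.sqrt η))^2 = 4*(C*σ)^2*(n:ℝ)^2*η := by
          rw [show (2*C*σ*((n:ℝ)*Real.sqrt η))^2
            = 4*(C*σ)^2*(n:ℝ)^2*(Real.sqrt η^2) from by ring, hsqη]
        calc (4 * (C*σ)^2 * n * D.card : ℝ)
            = (4*(C*σ)^2*(n:ℝ))*D.card := by ring
          _ ≤ (4*(C*σ)^2*(n:ℝ))*(η*n) := mul_le_mul_of_nonneg_left hDcard (by positivity)
          _ = 4*(C*σ)^2*(n:ℝ)^2*η := by ring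
          _ = (2*C*σ*((n:ℝ)*Real.sqrt η))^2 := hrhs.symm
      calc Real.sqrt (4 * (C*σ)^2 * n * D.card) ≤ Real.sqrt ((2*C*σ*((n:ℝ)*Real.sqrt η))^2) :=
            Real.sqrt_le_sqrt hb
        _ = 2*C*σ*((n:ℝ)*Real.sqrt η) := Real.sqrt_sq (by positivity)
    linarith [h1, hA3, hs]
  -- Step D2: dirty loss of wstar
  have stepD2 : ∑ i ∈ D, hinge d k γ wstar (x i) (y i) ≤ (1/γ) * (2*C*σ*((n:ℝ)*Real.sqrt η)) := by
    calc ∑ i ∈ D, hinge d k γ wstar (x i) (y i)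
        ≤ ∑ i ∈ D, (1/γ) * (⟪block d k wstar (y i), v i⟫ - ⟪block d k wstar (g i), v i⟫) :=
          Finset.sum_le_sum hpt
      _ = (1/γ) * ∑ i ∈ D, (⟪block d k wstar (y i), v i⟫ - ⟪block d k wstar (g i), v i⟫) := by
          rw [Finset.mul_sum]
      _ = (1/γ) * ∑ a : Fin k, ⟪block d k wstar a, sfib a - tfib a⟫ := by rw [hfib]
      _ ≤ (1/γ) * (2*C*σ*((n:ℝ)*Real.sqrt η)) :=
          mul_le_mul_of_nonneg_left hCS (by positivity)
  have stepD : ∑ i ∈ Cl ∪ D, hinge d k γ wstar (x i) (y i)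
      ≤ (1/γ) * (2*C*σ*((n:ℝ)*Real.sqrt η)) := by
    rw [Finset.sum_union hClD]
    linarith [stepD1, stepD2]
  have hfeas := hmin wstar hwstar
  have hfinal : (SP.card : ℝ) ≤ 4*C*σ*(n:ℝ)*Real.sqrt η/γ := by
    have e : 4*C*σ*(n:ℝ)*Real.sqrt η/γ = 2*((1/γ)*(2*C*σ*((n:ℝ)*Real.sqrt η))) := by ring
    rw [e]
    linarith [stepB, hfeas, stepD]
  have h0 : 0 ≤ 4*C*σ*(n:ℝ)*Real.sqrt η/γ := by positivity
  have e2 : 8*C*σ*(n:ℝ)*Real.sqrt η/γ = 2*(4*C*σ*(n:ℝ)*Real.sqrt η/γ) := by ring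
  rw [e2] at hSP
  linarith [hSP, hfinal, h0]
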